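/- Let n be a positive natural number and b = 2^m. Let A, B : Matrix (Fin n) (Fin n) ℝ with C = A * B. Let H1, H2 : Ω → (Fin n → Fin b) and S1, S2 : Ω → (Fin n → ({-1,1} : Set ℝ)) be mutually independent random functions, where each of H1, H2 is a pairwise independent uniform family into Fin b and each of S1, S2 is a pairwise independent uniform family of random signs. Define the random sketch P[k] = Σ_{(i',j') : H1(i') XOR H2(j') = k} S1(i')·S2(j')·C[i'][j'] and the estimator X̃(i,j) = S1(i)·S2(j)·P[H1(i) XOR H2(j)]. Then for every (i, j), Var(X̃(i,j)) ≤ ‖C‖_F² / b, where ‖C‖_F² = Σ_{i,j} C[i][j]² is the squared Frobenius norm of C. (This is the FWHT analogue of Theorem 3.1 of Pagh's compressed matrix multiplication.) -/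

import Mathlib

open MeasureTheory
open scoped ENNReal ProbabilityTheory

/-- Bitwise XOR on `Fin (2^m)`. -/
def fxor {m : ℕ} (i j : Fin (2^m)) : Fin (2^m) :=
  ⟨i.val ^^^ j.val, Nat.xor_lt_two_pow i.isLt j.isLt⟩

/-- The FWHT compressed-product sketch of a matrix `C` under hash functions
`h1, h2` and sign functions `s1, s2`:
`p[k] = Σ_{h1(i') ⊕ h2(j') = k} s1(i')·s2(j')·C[i'][j']`. -/
def sketch {n m : ℕ} (C : Matrix (Fin n) (Fin n) ℝ)
    (h1 h2 : Fin n → Fin (2^m)) (s1 s2 : Fin n → ℝ) : Fin (2^m) → ℝ :=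
  fun k => ∑ p ∈ Finset.univ.filter
      (fun p : Fin n × Fin n => fxor (h1 p.1) (h2 p.2) = k),
    s1 p.1 * s2 p.2 * C p.1 p.2

/-- The decompressed estimate of entry `(i,j)`:
`s1(i)·s2(j)·p[h1(i) ⊕ h2(j)]`. -/
def estimate {n m : ℕ} (C : Matrix (Fin n) (Fin n) ℝ)
    (h1 h2 : Fin n → Fin (2^m)) (s1 s2 : Fin n → ℝ) (i j : Fin n) : ℝ :=
  s1 i * s2 j * sketch C h1 h2 s1 s2 (fxor (h1 i) (h2 j))

namespace CMMAux

open Finset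

/-- sign value of a Boolean. -/
noncomputable def sgn (c : Bool) : ℝ := if c then 1 else -1

lemma sgn_true : sgn true = 1 := by norm_num [sgn]

lemma sgn_false : sgn false = -1 := by norm_num [sgn]

lemma sgn_mul_self (c : Bool) : sgn c * sgn c = 1 := by cases c <;> norm_num [sgn]

lemma sgn_mem (c : Bool) : sgn c ∈ ({-1, 1} : Set ℝ) := by cases c <;> simp [sgn]

lemma decide_eq_iff {x : ℝ} (hx : x ∈ ({-1, 1} : Set ℝ)) (c : Bool) :
    (decide (x = 1) = c) ↔ x = sgn c := by
  simp only [Set.mem_insert_iff, Set.mem_singleton_iff] at hx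
  rcases hx with h | h <;> subst h <;> cases c <;>
    norm_num [sgn, decide_eq_true_eq, decide_eq_false_iff_not]

lemma sgn_decide {x : ℝ} (hx : x ∈ ({-1, 1} : Set ℝ)) : sgn (decide (x = 1)) = x := by
  simp only [Set.mem_insert_iff, Set.mem_singleton_iff] at hx
  rcases hx with h | h <;> subst h <;>
    norm_num [sgn, decide_eq_true_eq, decide_eq_false_iff_not]

lemma natxor_swap (a b c d : ℕ) : (a ^^^ b) ^^^ (c ^^^ d) = (a ^^^ c) ^^^ (b ^^^ d) := by
  rw [Nat.xor_assoc, Nat.xor_assoc]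
  congr 1
  rw [← Nat.xor_assoc, Nat.xor_comm b c, Nat.xor_assoc]

lemma fxor_val {m : ℕ} (a b : Fin (2^m)) : (fxor a b).val = a.val ^^^ b.val := rfl

lemma fxor_cancel {m : ℕ} (a b : Fin (2^m)) : fxor a (fxor a b) = b :=
  Fin.val_injective (by simp [fxor_val, Nat.xor_xor_cancel_left])

lemma fxor_rearrange {m : ℕ} (a b c d : Fin (2^m)) :
    fxor a b = fxor c d ↔ fxor a c = fxor b d := by
  have key : ∀ x y z w : ℕ, x ^^^ y = z ^^^ w → x ^^^ z = y ^^^ w := by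
    intro x y z w h
    have h0 : (x ^^^ y) ^^^ (z ^^^ w) = 0 := by rw [h, Nat.xor_self]
    rw [natxor_swap] at h0
    exact Nat.xor_eq_zero_iff.mp h0
  rw [Fin.ext_iff, Fin.ext_iff, fxor_val, fxor_val, fxor_val, fxor_val]
  exact ⟨key _ _ _ _, key _ _ _ _⟩

lemma fxor_left_cancel {m : ℕ} (a x y : Fin (2^m)) : fxor a x = fxor a y ↔ x = y := by
  constructor
  · intro h
    have := congrArg (fun t => fxor a t) h
    simpa [fxor_cancel] using this
  · rintro rfl; rfl

lemma fxor_right_cancel {m : ℕ} (a x y : Fin (2^m)) : fxor x a = fxor y a ↔ x = y := by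
  have hc : ∀ u v : Fin (2^m), fxor u v = fxor v u := fun u v =>
    Fin.val_injective (by simp [fxor_val, Nat.xor_comm])
  rw [hc x a, hc y a, fxor_left_cancel]

lemma fxor_solve {m : ℕ} (a x c : Fin (2^m)) : fxor a x = c ↔ x = fxor a c := by
  constructor
  · intro h; rw [← h, fxor_cancel]
  · intro h; rw [h, fxor_cancel]

lemma sum_pair_ind {α β : Type*} [Fintype α] [Fintype β] [DecidableEq β]
    (ν : α → ℝ) (e e' : α → β) (φ : β → β) (r : ℝ)
    (hp : ∀ u : β, ∑ f ∈ univ.filter (fun f => e f = u ∧ e' f = φ u), ν f = r) :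
    ∑ f, ν f * (if e' f = φ (e f) then 1 else 0) = (Fintype.card β : ℝ) * r := by
  classical
  rw [← Finset.sum_fiberwise univ e (fun f => ν f * (if e' f = φ (e f) then 1 else 0))]
  have h1 : ∀ u : β,
      ∑ f ∈ univ.filter (fun f => e f = u), ν f * (if e' f = φ (e f) then 1 else 0) = r := by
    intro u
    have hfe : filter (fun f => e f = u ∧ e' f = φ u) univ
        = filter (fun f => e' f = φ (e f)) (filter (fun f => e f = u) univ) := by
      rw [Finset.filter_filter]
      refine Finset.filter_congr fun f _ => ?_
      constructor
      · rintro ⟨ha, hb⟩; exact ⟨ha, by rw [ha]; exact hb⟩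
      · rintro ⟨ha, hb⟩; exact ⟨ha, by rwa [ha] at hb⟩
    calc ∑ f ∈ univ.filter (fun f => e f = u), ν f * (if e' f = φ (e f) then 1 else 0)
        = ∑ f ∈ univ.filter (fun f => e f = u), (if e' f = φ (e f) then ν f else 0) :=
          Finset.sum_congr rfl fun f _ => by by_cases h : e' f = φ (e f) <;> simp [h]
      _ = ∑ f ∈ filter (fun f => e' f = φ (e f)) (filter (fun f => e f = u) univ), ν f :=
          (Finset.sum_filter _ _).symm
      _ = ∑ f ∈ filter (fun f => e f = u ∧ e' f = φ u) univ, ν f := by rw [hfe]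
      _ = r := hp u
  rw [Finset.sum_congr rfl (fun u _ => h1 u), Finset.sum_const, Finset.card_univ,
    nsmul_eq_mul]

lemma sum_mul_pull {D : Type*} [Fintype D] (d : D → ℝ) (A r : ℝ) :
    ∑ t, A * d t * r = A * (∑ t, d t) * r := by
  rw [← Finset.sum_mul, ← Finset.mul_sum]

lemma sum_factor4 {A B C D : Type*} [Fintype A] [Fintype B] [Fintype C] [Fintype D]
    (a : A → B → ℝ) (c : C → ℝ) (d : D → ℝ) (r : ℝ) :
    ∑ x : A, ∑ y : B, ∑ z : C, ∑ t : D, a x y * c z * d t * r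
      = (∑ x : A, ∑ y : B, a x y) * (∑ z : C, c z) * (∑ t : D, d t) * r := by
  have step1 : ∀ x y, ∑ z : C, ∑ t : D, a x y * c z * d t * r
      = a x y * ((∑ z, c z) * ((∑ t, d t) * r)) := by
    intro x y
    have hz : ∀ z, ∑ t : D, a x y * c z * d t * r = (a x y * c z) * (∑ t, d t) * r :=
      fun z => sum_mul_pull d _ r
    rw [Finset.sum_congr rfl (fun z _ => hz z)]
    have : ∀ z, a x y * c z * (∑ t, d t) * r = a x y * c z * ((∑ t, d t) * r) := by
      intro z; ring
    rw [Finset.sum_congr rfl (fun z _ => this z), sum_mul_pull c (a x y) ((∑ t, d t) * r)]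
    ring
  calc ∑ x : A, ∑ y : B, ∑ z : C, ∑ t : D, a x y * c z * d t * r
      = ∑ x : A, ∑ y : B, a x y * ((∑ z, c z) * ((∑ t, d t) * r)) :=
        Finset.sum_congr rfl fun x _ => Finset.sum_congr rfl fun y _ => step1 x y
    _ = ∑ x : A, (∑ y : B, a x y) * ((∑ z, c z) * ((∑ t, d t) * r)) := by
        refine Finset.sum_congr rfl fun x _ => ?_
        rw [← Finset.sum_mul]
    _ = (∑ x : A, ∑ y : B, a x y) * ((∑ z, c z) * ((∑ t, d t) * r)) := by
        rw [← Finset.sum_mul]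
    _ = (∑ x : A, ∑ y : B, a x y) * (∑ z : C, c z) * (∑ t : D, d t) * r := by ring

lemma hash_sum {n m : ℕ} (i j : Fin n) (p : Fin n × Fin n) (hp : p ≠ (i, j))
    (ν1 ν2 : (Fin n → Fin (2^m)) → ℝ)
    (hν1p : ∀ a a', a ≠ a' → ∀ u v,
      ∑ f ∈ univ.filter (fun f => f a = u ∧ f a' = v), ν1 f = 1/(2^m : ℝ) * (1/(2^m : ℝ)))
    (hν1t : ∑ f, ν1 f = 1)
    (hν2p : ∀ a a', a ≠ a' → ∀ u v,
      ∑ f ∈ univ.filter (fun f => f a = u ∧ f a' = v), ν2 f = 1/(2^m : ℝ) * (1/(2^m : ℝ)))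
    (hν2t : ∑ f, ν2 f = 1) :
    ∑ f1, ∑ f2, ν1 f1 * ν2 f2 *
      (if fxor (f1 p.1) (f2 p.2) = fxor (f1 i) (f2 j) then (1:ℝ) else 0) = 1/(2^m : ℝ) := by
  classical
  have hb : (0:ℝ) < 2^m := by positivity
  have hmul : ((Fintype.card (Fin (2^m)) : ℕ) : ℝ) * (1/(2^m : ℝ) * (1/(2^m : ℝ)))
      = 1/(2^m : ℝ) := by
    have hcard : ((Fintype.card (Fin (2^m)) : ℕ) : ℝ) = (2^m : ℝ) := by simp
    rw [hcard]; field_simp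
  by_cases h1 : p.1 = i
  · have h2 : p.2 ≠ j := fun h => hp (Prod.ext h1 h)
    have key : ∑ f2, ν2 f2 * (if f2 j = f2 p.2 then (1:ℝ) else 0) = 1/(2^m : ℝ) := by
      have h := sum_pair_ind ν2 (fun f => f p.2) (fun f => f j) id
        (1/(2^m : ℝ) * (1/(2^m : ℝ))) (fun u => hν2p p.2 j h2 u u)
      rw [hmul] at h
      exact h
    calc ∑ f1, ∑ f2, ν1 f1 * ν2 f2 *
          (if fxor (f1 p.1) (f2 p.2) = fxor (f1 i) (f2 j) then (1:ℝ) else 0)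
        = ∑ f1, ν1 f1 * (1/(2^m : ℝ)) := by
          refine Finset.sum_congr rfl fun f1 _ => ?_
          have hterm : ∀ f2, ν1 f1 * ν2 f2 *
              (if fxor (f1 p.1) (f2 p.2) = fxor (f1 i) (f2 j) then (1:ℝ) else 0)
              = ν1 f1 * (ν2 f2 * (if f2 j = f2 p.2 then (1:ℝ) else 0)) := by
            intro f2
            rw [h1]
            simp only [fxor_left_cancel]
            by_cases hc : f2 p.2 = f2 j
            · rw [if_pos hc, if_pos hc.symm]; ring
            · rw [if_neg hc, if_neg (fun h => hc h.symm)]; ring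
          rw [Finset.sum_congr rfl (fun f2 _ => hterm f2), ← Finset.mul_sum, key]
      _ = 1/(2^m : ℝ) := by rw [← Finset.sum_mul, hν1t, one_mul]
  · by_cases h2 : p.2 = j
    · have key : ∑ f1, ν1 f1 * (if f1 i = f1 p.1 then (1:ℝ) else 0) = 1/(2^m : ℝ) := by
        have h := sum_pair_ind ν1 (fun f => f p.1) (fun f => f i) id
          (1/(2^m : ℝ) * (1/(2^m : ℝ))) (fun u => hν1p p.1 i h1 u u)
        rw [hmul] at h
        exact h
      calc ∑ f1, ∑ f2, ν1 f1 * ν2 f2 *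
            (if fxor (f1 p.1) (f2 p.2) = fxor (f1 i) (f2 j) then (1:ℝ) else 0)
          = ∑ f1, ν1 f1 * (if f1 i = f1 p.1 then (1:ℝ) else 0) := by
            refine Finset.sum_congr rfl fun f1 _ => ?_
            have hterm : ∀ f2, ν1 f1 * ν2 f2 *
                (if fxor (f1 p.1) (f2 p.2) = fxor (f1 i) (f2 j) then (1:ℝ) else 0)
                = (ν1 f1 * (if f1 i = f1 p.1 then (1:ℝ) else 0)) * ν2 f2 := by
              intro f2
              rw [h2]
              simp only [fxor_right_cancel]
              by_cases hc : f1 p.1 = f1 i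
              · rw [if_pos hc, if_pos hc.symm]; ring
              · rw [if_neg hc, if_neg (fun h => hc h.symm)]; ring
            rw [Finset.sum_congr rfl (fun f2 _ => hterm f2), ← Finset.mul_sum, hν2t, mul_one]
        _ = 1/(2^m : ℝ) := key
    · calc ∑ f1, ∑ f2, ν1 f1 * ν2 f2 *
            (if fxor (f1 p.1) (f2 p.2) = fxor (f1 i) (f2 j) then (1:ℝ) else 0)
          = ∑ f1, ν1 f1 * (1/(2^m : ℝ)) := by
            refine Finset.sum_congr rfl fun f1 _ => ?_
            have inner : ∑ f2, ν2 f2 *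
                (if f2 j = fxor (f2 p.2) (fxor (f1 p.1) (f1 i)) then (1:ℝ) else 0)
                = 1/(2^m : ℝ) := by
              have h := sum_pair_ind ν2 (fun f => f p.2) (fun f => f j)
                (fun v => fxor v (fxor (f1 p.1) (f1 i))) (1/(2^m : ℝ) * (1/(2^m : ℝ)))
                (fun u => hν2p p.2 j h2 u (fxor u (fxor (f1 p.1) (f1 i))))
              rw [hmul] at h
              exact h
            have hterm : ∀ f2, ν1 f1 * ν2 f2 *
                (if fxor (f1 p.1) (f2 p.2) = fxor (f1 i) (f2 j) then (1:ℝ) else 0)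
                = ν1 f1 * (ν2 f2 *
                  (if f2 j = fxor (f2 p.2) (fxor (f1 p.1) (f1 i)) then (1:ℝ) else 0)) := by
              intro f2
              by_cases hc : f2 j = fxor (f2 p.2) (fxor (f1 p.1) (f1 i))
              · rw [if_pos hc, if_pos]
                · ring
                · rw [fxor_rearrange]
                  exact ((fxor_solve _ _ _).mpr hc).symm
              · rw [if_neg hc, if_neg]
                · ring
                · intro h
                  exact hc ((fxor_solve _ _ _).mp ((fxor_rearrange _ _ _ _).mp h).symm)
            rw [Finset.sum_congr rfl (fun f2 _ => hterm f2), ← Finset.mul_sum, inner]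
        _ = 1/(2^m : ℝ) := by rw [← Finset.sum_mul, hν1t, one_mul]

lemma sign_sum {n : ℕ} (ν : (Fin n → Bool) → ℝ)
    (hpair : ∀ a a', a ≠ a' → ∀ c c' : Bool,
      ∑ g ∈ univ.filter (fun g => g a = c ∧ g a' = c'), ν g = 1/2 * (1/2 : ℝ))
    (htot : ∑ g, ν g = 1) (a a' : Fin n) :
    ∑ g, ν g * (sgn (g a) * sgn (g a')) = if a = a' then (1:ℝ) else 0 := by
  classical
  by_cases h : a = a'
  · subst h
    rw [if_pos rfl, Finset.sum_congr rfl
      (fun g _ => by rw [sgn_mul_self, mul_one] : ∀ g ∈ univ, ν g * (sgn (g a) * sgn (g a)) = ν g)]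
    exact htot
  · rw [if_neg h]
    rw [← Finset.sum_fiberwise univ (fun g => (g a, g a'))
      (fun g => ν g * (sgn (g a) * sgn (g a')))]
    have hfib : ∀ q : Bool × Bool,
        ∑ g ∈ univ.filter (fun g => (g a, g a') = q), ν g * (sgn (g a) * sgn (g a'))
        = sgn q.1 * sgn q.2 * (1/2 * (1/2 : ℝ)) := by
      intro q
      have hfe : univ.filter (fun g : Fin n → Bool => (g a, g a') = q)
          = univ.filter (fun g : Fin n → Bool => g a = q.1 ∧ g a' = q.2) :=
        Finset.filter_congr fun g _ => by simp [Prod.ext_iff]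
      rw [hfe]
      have hcong : ∀ g ∈ univ.filter (fun g : Fin n → Bool => g a = q.1 ∧ g a' = q.2),
          ν g * (sgn (g a) * sgn (g a')) = ν g * (sgn q.1 * sgn q.2) := by
        intro g hg
        rw [Finset.mem_filter] at hg
        rw [hg.2.1, hg.2.2]
      rw [Finset.sum_congr rfl hcong, ← Finset.sum_mul, hpair a a' h q.1 q.2]
      ring
    rw [Finset.sum_congr rfl (fun q _ => hfib q), Fintype.sum_prod_type]
    simp [Fintype.sum_bool, sgn]
    try norm_num
    try ring

lemma weight_filter {Ω : Type*} [MeasurableSpace Ω] (μ : Measure Ω) [IsFiniteMeasure μ]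
    {α : Type*} [Fintype α] [MeasurableSpace α] [MeasurableSingletonClass α]
    {X : Ω → α} (hX : Measurable X) (P : α → Prop) [DecidablePred P] :
    ∑ f ∈ univ.filter P, (μ (X ⁻¹' {f})).toReal = (μ (X ⁻¹' {f | P f})).toReal := by
  classical
  rw [← ENNReal.toReal_sum (fun a _ => measure_ne_top μ _)]
  congr 1
  rw [← measure_biUnion_finset (fun f _ g _ hfg =>
      (Set.disjoint_singleton.mpr hfg).preimage X)
    (fun f _ => hX (measurableSet_singleton f))]
  congr 1
  ext ω
  simp

lemma comp_decomp {Ω K : Type*} [Fintype K] (F : Ω → K) (ψ : K → ℝ) :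
    (fun ω => ψ (F ω)) = fun ω => ∑ k : K, Set.indicator (F ⁻¹' {k}) (fun _ => ψ k) ω := by
  classical
  funext ω
  rw [Finset.sum_eq_single (F ω)]
  · rw [Set.indicator_of_mem (Set.mem_preimage.mpr (Set.mem_singleton _))]
  · intro k _ hk
    exact Set.indicator_of_notMem (fun h => hk (Set.mem_singleton_iff.mp h).symm) (fun _ => ψ k)
  · exact fun h => absurd (Finset.mem_univ _) h

lemma integral_comp_fintype {Ω : Type*} [MeasureSpace Ω] [IsProbabilityMeasure (ℙ : Measure Ω)]
    {K : Type*} [Fintype K] [MeasurableSpace K] [MeasurableSingletonClass K]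
    {F : Ω → K} (hF : Measurable F) (ψ : K → ℝ) :
    ∫ ω, ψ (F ω) ∂ℙ = ∑ k : K, (ℙ (F ⁻¹' {k})).toReal * ψ k := by
  rw [comp_decomp F ψ, integral_finset_sum _ (fun k _ =>
    (integrable_const (ψ k)).indicator (hF (measurableSet_singleton k)))]
  refine Finset.sum_congr rfl fun k _ => ?_
  rw [integral_indicator_const (ψ k) (hF (measurableSet_singleton k)), smul_eq_mul]
  rfl

lemma memLp_comp_fintype {Ω : Type*} [MeasureSpace Ω] [IsProbabilityMeasure (ℙ : Measure Ω)]
    {K : Type*} [Fintype K] [MeasurableSpace K] [MeasurableSingletonClass K]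
    {F : Ω → K} (hF : Measurable F) (ψ : K → ℝ) :
    MemLp (fun ω => ψ (F ω)) 2 ℙ := by
  rw [comp_decomp F ψ]
  exact memLp_finsetSum _ fun k _ => memLp_indicator_const 2
    (hF (measurableSet_singleton k)) _ (Or.inr (measure_ne_top _ _))

noncomputable def phi4 {n m : ℕ} (C : Matrix (Fin n) (Fin n) ℝ) (i j : Fin n)
    (f1 f2 : Fin n → Fin (2^m)) (g1 g2 : Fin n → Bool) : ℝ :=
  ∑ p : Fin n × Fin n,
    (if fxor (f1 p.1) (f2 p.2) = fxor (f1 i) (f2 j) then (1:ℝ) else 0)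
      * (sgn (g1 i) * sgn (g1 p.1)) * (sgn (g2 j) * sgn (g2 p.2)) * C p.1 p.2

lemma sum4_swap_factor {A B C D P : Type*} [Fintype A] [Fintype B] [Fintype C] [Fintype D]
    [Fintype P] (a : A → B → P → ℝ) (c : C → P → ℝ) (d : D → P → ℝ) (r : P → ℝ) :
    ∑ x : A, ∑ y : B, ∑ z : C, ∑ t : D, ∑ p : P, a x y p * c z p * d t p * r p
      = ∑ p : P, (∑ x : A, ∑ y : B, a x y p) * (∑ z : C, c z p) * (∑ t : D, d t p) * r p := by
  calc ∑ x : A, ∑ y : B, ∑ z : C, ∑ t : D, ∑ p : P, a x y p * c z p * d t p * r p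
      = ∑ x : A, ∑ y : B, ∑ z : C, ∑ p : P, ∑ t : D, a x y p * c z p * d t p * r p :=
        Finset.sum_congr rfl fun x _ => Finset.sum_congr rfl fun y _ =>
          Finset.sum_congr rfl fun z _ => Finset.sum_comm
    _ = ∑ x : A, ∑ y : B, ∑ p : P, ∑ z : C, ∑ t : D, a x y p * c z p * d t p * r p :=
        Finset.sum_congr rfl fun x _ => Finset.sum_congr rfl fun y _ => Finset.sum_comm
    _ = ∑ x : A, ∑ p : P, ∑ y : B, ∑ z : C, ∑ t : D, a x y p * c z p * d t p * r p :=
        Finset.sum_congr rfl fun x _ => Finset.sum_comm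
    _ = ∑ p : P, ∑ x : A, ∑ y : B, ∑ z : C, ∑ t : D, a x y p * c z p * d t p * r p :=
        Finset.sum_comm
    _ = ∑ p : P, (∑ x : A, ∑ y : B, a x y p) * (∑ z : C, c z p) * (∑ t : D, d t p) * r p :=
        Finset.sum_congr rfl fun p _ =>
          sum_factor4 (fun x y => a x y p) (fun z => c z p) (fun t => d t p) (r p)

set_option maxHeartbeats 2000000 in
theorem main_bound {n m : ℕ} (i j : Fin n) (C : Matrix (Fin n) (Fin n) ℝ)
    (ν1 ν2 : (Fin n → Fin (2^m)) → ℝ) (ν3 ν4 : (Fin n → Bool) → ℝ)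
    (hν1p : ∀ a a', a ≠ a' → ∀ u v,
      ∑ f ∈ univ.filter (fun f => f a = u ∧ f a' = v), ν1 f = 1/(2^m : ℝ) * (1/(2^m : ℝ)))
    (hν1t : ∑ f, ν1 f = 1)
    (hν2p : ∀ a a', a ≠ a' → ∀ u v,
      ∑ f ∈ univ.filter (fun f => f a = u ∧ f a' = v), ν2 f = 1/(2^m : ℝ) * (1/(2^m : ℝ)))
    (hν2t : ∑ f, ν2 f = 1)
    (hν3p : ∀ a a', a ≠ a' → ∀ c c' : Bool,
      ∑ g ∈ univ.filter (fun g => g a = c ∧ g a' = c'), ν3 g = 1/2 * (1/2 : ℝ))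
    (hν3t : ∑ g, ν3 g = 1)
    (hν4p : ∀ a a', a ≠ a' → ∀ c c' : Bool,
      ∑ g ∈ univ.filter (fun g => g a = c ∧ g a' = c'), ν4 g = 1/2 * (1/2 : ℝ))
    (hν4t : ∑ g, ν4 g = 1) :
    (∑ f1, ∑ f2, ∑ g1, ∑ g2, (ν1 f1 * ν2 f2 * ν3 g1 * ν4 g2) * (phi4 C i j f1 f2 g1 g2)^2)
      - (∑ f1, ∑ f2, ∑ g1, ∑ g2, (ν1 f1 * ν2 f2 * ν3 g1 * ν4 g2) * phi4 C i j f1 f2 g1 g2)^2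
      ≤ (∑ i' : Fin n, ∑ j' : Fin n, (C i' j')^2) / (2^m : ℝ) := by
  classical
  have hb0 : (0:ℝ) < 2^m := by positivity
  have hsign1 := sign_sum ν3 hν3p hν3t
  have hsign2 := sign_sum ν4 hν4p hν4t
  -- the hash collision probability
  have hHpair : ∀ p : Fin n × Fin n,
      (∑ f1, ∑ f2, ν1 f1 * ν2 f2 *
        (if fxor (f1 p.1) (f2 p.2) = fxor (f1 i) (f2 j) then (1:ℝ) else 0))
      = if p = (i, j) then (1:ℝ) else 1/(2^m : ℝ) := by
    intro p
    by_cases hp : p = (i, j)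
    · subst hp
      rw [if_pos rfl]
      calc ∑ f1, ∑ f2, ν1 f1 * ν2 f2 *
            (if fxor (f1 (i, j).1) (f2 (i, j).2) = fxor (f1 i) (f2 j) then (1:ℝ) else 0)
          = ∑ f1, ∑ f2, ν1 f1 * ν2 f2 := by
            refine Finset.sum_congr rfl fun f1 _ => Finset.sum_congr rfl fun f2 _ => ?_
            rw [if_pos rfl, mul_one]
        _ = ∑ f1, ν1 f1 * 1 := by
            refine Finset.sum_congr rfl fun f1 _ => ?_
            rw [← Finset.mul_sum, hν2t]
        _ = 1 := by simp [hν1t]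
    · rw [if_neg hp]
      exact hash_sum i j p hp ν1 ν2 hν1p hν1t hν2p hν2t
  -- the mean
  have hmean : (∑ f1, ∑ f2, ∑ g1, ∑ g2,
      (ν1 f1 * ν2 f2 * ν3 g1 * ν4 g2) * phi4 C i j f1 f2 g1 g2) = C i j := by
    have step : ∀ (f1 f2 : Fin n → Fin (2^m)) (g1 g2 : Fin n → Bool),
        (ν1 f1 * ν2 f2 * ν3 g1 * ν4 g2) * phi4 C i j f1 f2 g1 g2
        = ∑ p : Fin n × Fin n,
            (ν1 f1 * ν2 f2 *
              (if fxor (f1 p.1) (f2 p.2) = fxor (f1 i) (f2 j) then (1:ℝ) else 0))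
            * (ν3 g1 * (sgn (g1 i) * sgn (g1 p.1)))
            * (ν4 g2 * (sgn (g2 j) * sgn (g2 p.2)))
            * C p.1 p.2 := by
      intro f1 f2 g1 g2
      simp only [phi4]
      rw [Finset.mul_sum]
      exact Finset.sum_congr rfl fun p _ => by ring
    calc ∑ f1, ∑ f2, ∑ g1, ∑ g2, (ν1 f1 * ν2 f2 * ν3 g1 * ν4 g2) * phi4 C i j f1 f2 g1 g2
        = ∑ f1, ∑ f2, ∑ g1, ∑ g2, ∑ p : Fin n × Fin n,
            (ν1 f1 * ν2 f2 *
              (if fxor (f1 p.1) (f2 p.2) = fxor (f1 i) (f2 j) then (1:ℝ) else 0))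
            * (ν3 g1 * (sgn (g1 i) * sgn (g1 p.1)))
            * (ν4 g2 * (sgn (g2 j) * sgn (g2 p.2)))
            * C p.1 p.2 :=
          Finset.sum_congr rfl fun f1 _ => Finset.sum_congr rfl fun f2 _ =>
            Finset.sum_congr rfl fun g1 _ => Finset.sum_congr rfl fun g2 _ => step f1 f2 g1 g2
      _ = ∑ p : Fin n × Fin n,
            (∑ f1, ∑ f2, ν1 f1 * ν2 f2 *
              (if fxor (f1 p.1) (f2 p.2) = fxor (f1 i) (f2 j) then (1:ℝ) else 0))
            * (∑ g1, ν3 g1 * (sgn (g1 i) * sgn (g1 p.1)))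
            * (∑ g2, ν4 g2 * (sgn (g2 j) * sgn (g2 p.2)))
            * C p.1 p.2 :=
          sum4_swap_factor (A := Fin n → Fin (2^m)) (B := Fin n → Fin (2^m))
            (C := Fin n → Bool) (D := Fin n → Bool) (P := Fin n × Fin n)
            (fun f1 f2 (p : Fin n × Fin n) => ν1 f1 * ν2 f2 *
              (if fxor (f1 p.1) (f2 p.2) = fxor (f1 i) (f2 j) then (1:ℝ) else 0))
            (fun g1 (p : Fin n × Fin n) => ν3 g1 * (sgn (g1 i) * sgn (g1 p.1)))
            (fun g2 (p : Fin n × Fin n) => ν4 g2 * (sgn (g2 j) * sgn (g2 p.2)))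
            (fun p : Fin n × Fin n => C p.1 p.2)
      _ = ∑ p : Fin n × Fin n,
            (if p = (i, j) then (1:ℝ) else 1/(2^m : ℝ))
            * (if i = p.1 then (1:ℝ) else 0)
            * (if j = p.2 then (1:ℝ) else 0)
            * C p.1 p.2 := by
          refine Finset.sum_congr rfl fun p _ => ?_
          rw [hHpair p, hsign1 i p.1, hsign2 j p.2]
      _ = C i j := by
          rw [Finset.sum_eq_single ((i, j) : Fin n × Fin n)]
          · simp
          · intro p _ hp
            by_cases h1 : i = p.1
            · have h2 : ¬ j = p.2 := fun h2 => hp (Prod.ext_iff.mpr ⟨h1.symm, h2.symm⟩)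
              simp [h2]
            · simp [h1]
          · intro h
            exact absurd (Finset.mem_univ _) h
  -- the second moment
  have hsq2 : (∑ f1, ∑ f2, ∑ g1, ∑ g2,
      (ν1 f1 * ν2 f2 * ν3 g1 * ν4 g2) * (phi4 C i j f1 f2 g1 g2)^2)
      = ∑ p : Fin n × Fin n,
          (if p = (i, j) then (1:ℝ) else 1/(2^m : ℝ)) * (C p.1 p.2)^2 := by
    have step : ∀ (f1 f2 : Fin n → Fin (2^m)) (g1 g2 : Fin n → Bool),
        (ν1 f1 * ν2 f2 * ν3 g1 * ν4 g2) * (phi4 C i j f1 f2 g1 g2)^2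
        = ∑ pq : (Fin n × Fin n) × (Fin n × Fin n),
            (ν1 f1 * ν2 f2 *
              ((if fxor (f1 pq.1.1) (f2 pq.1.2) = fxor (f1 i) (f2 j) then (1:ℝ) else 0)
                * (if fxor (f1 pq.2.1) (f2 pq.2.2) = fxor (f1 i) (f2 j) then (1:ℝ) else 0)))
            * (ν3 g1 * (sgn (g1 pq.1.1) * sgn (g1 pq.2.1)))
            * (ν4 g2 * (sgn (g2 pq.1.2) * sgn (g2 pq.2.2)))
            * (C pq.1.1 pq.1.2 * C pq.2.1 pq.2.2) := by
      intro f1 f2 g1 g2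
      rw [Fintype.sum_prod_type]
      simp only [phi4]
      rw [pow_two, Finset.sum_mul_sum, Finset.mul_sum]
      refine Finset.sum_congr rfl fun p _ => ?_
      rw [Finset.mul_sum]
      refine Finset.sum_congr rfl fun q _ => ?_
      cases hgi : g1 i <;> cases hgj : g2 j <;> simp only [sgn_false, sgn_true] <;> ring
    calc ∑ f1, ∑ f2, ∑ g1, ∑ g2, (ν1 f1 * ν2 f2 * ν3 g1 * ν4 g2) * (phi4 C i j f1 f2 g1 g2)^2
        = ∑ f1, ∑ f2, ∑ g1, ∑ g2, ∑ pq : (Fin n × Fin n) × (Fin n × Fin n),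
            (ν1 f1 * ν2 f2 *
              ((if fxor (f1 pq.1.1) (f2 pq.1.2) = fxor (f1 i) (f2 j) then (1:ℝ) else 0)
                * (if fxor (f1 pq.2.1) (f2 pq.2.2) = fxor (f1 i) (f2 j) then (1:ℝ) else 0)))
            * (ν3 g1 * (sgn (g1 pq.1.1) * sgn (g1 pq.2.1)))
            * (ν4 g2 * (sgn (g2 pq.1.2) * sgn (g2 pq.2.2)))
            * (C pq.1.1 pq.1.2 * C pq.2.1 pq.2.2) :=
          Finset.sum_congr rfl fun f1 _ => Finset.sum_congr rfl fun f2 _ =>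
            Finset.sum_congr rfl fun g1 _ => Finset.sum_congr rfl fun g2 _ => step f1 f2 g1 g2
      _ = ∑ pq : (Fin n × Fin n) × (Fin n × Fin n),
            (∑ f1, ∑ f2, ν1 f1 * ν2 f2 *
              ((if fxor (f1 pq.1.1) (f2 pq.1.2) = fxor (f1 i) (f2 j) then (1:ℝ) else 0)
                * (if fxor (f1 pq.2.1) (f2 pq.2.2) = fxor (f1 i) (f2 j) then (1:ℝ) else 0)))
            * (∑ g1, ν3 g1 * (sgn (g1 pq.1.1) * sgn (g1 pq.2.1)))
            * (∑ g2, ν4 g2 * (sgn (g2 pq.1.2) * sgn (g2 pq.2.2)))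
            * (C pq.1.1 pq.1.2 * C pq.2.1 pq.2.2) :=
          sum4_swap_factor (A := Fin n → Fin (2^m)) (B := Fin n → Fin (2^m))
            (C := Fin n → Bool) (D := Fin n → Bool)
            (P := (Fin n × Fin n) × (Fin n × Fin n))
            (fun f1 f2 (pq : (Fin n × Fin n) × (Fin n × Fin n)) => ν1 f1 * ν2 f2 *
              ((if fxor (f1 pq.1.1) (f2 pq.1.2) = fxor (f1 i) (f2 j) then (1:ℝ) else 0)
                * (if fxor (f1 pq.2.1) (f2 pq.2.2) = fxor (f1 i) (f2 j) then (1:ℝ) else 0)))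
            (fun g1 (pq : (Fin n × Fin n) × (Fin n × Fin n)) =>
              ν3 g1 * (sgn (g1 pq.1.1) * sgn (g1 pq.2.1)))
            (fun g2 (pq : (Fin n × Fin n) × (Fin n × Fin n)) =>
              ν4 g2 * (sgn (g2 pq.1.2) * sgn (g2 pq.2.2)))
            (fun pq : (Fin n × Fin n) × (Fin n × Fin n) => C pq.1.1 pq.1.2 * C pq.2.1 pq.2.2)
      _ = ∑ p : Fin n × Fin n, (if p = (i, j) then (1:ℝ) else 1/(2^m : ℝ)) * (C p.1 p.2)^2 := by
          rw [Fintype.sum_prod_type]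
          refine Finset.sum_congr rfl fun p _ => ?_
          rw [Finset.sum_eq_single p]
          · have hDD : (∑ f1, ∑ f2, ν1 f1 * ν2 f2 *
                ((if fxor (f1 p.1) (f2 p.2) = fxor (f1 i) (f2 j) then (1:ℝ) else 0)
                  * (if fxor (f1 p.1) (f2 p.2) = fxor (f1 i) (f2 j) then (1:ℝ) else 0)))
                = ∑ f1, ∑ f2, ν1 f1 * ν2 f2 *
                  (if fxor (f1 p.1) (f2 p.2) = fxor (f1 i) (f2 j) then (1:ℝ) else 0) := by
              refine Finset.sum_congr rfl fun f1 _ => Finset.sum_congr rfl fun f2 _ => ?_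
              by_cases hc : fxor (f1 p.1) (f2 p.2) = fxor (f1 i) (f2 j) <;> simp [hc]
            show (∑ f1, ∑ f2, ν1 f1 * ν2 f2 *
                ((if fxor (f1 p.1) (f2 p.2) = fxor (f1 i) (f2 j) then (1:ℝ) else 0)
                  * (if fxor (f1 p.1) (f2 p.2) = fxor (f1 i) (f2 j) then (1:ℝ) else 0)))
              * (∑ g1, ν3 g1 * (sgn (g1 p.1) * sgn (g1 p.1)))
              * (∑ g2, ν4 g2 * (sgn (g2 p.2) * sgn (g2 p.2)))
              * (C p.1 p.2 * C p.1 p.2)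
              = (if p = (i, j) then (1:ℝ) else 1/(2^m : ℝ)) * (C p.1 p.2)^2
            rw [hDD, hHpair p, hsign1 p.1 p.1, hsign2 p.2 p.2, if_pos rfl, if_pos rfl]
            ring
          · intro q _ hq
            by_cases h1 : p.1 = q.1
            · have h2 : ¬ p.2 = q.2 := fun h2 => hq (Prod.ext_iff.mpr ⟨h1, h2⟩).symm
              have := hsign2 p.2 q.2
              rw [if_neg h2] at this
              show _ * (∑ g1, ν3 g1 * (sgn (g1 p.1) * sgn (g1 q.1)))
                * (∑ g2, ν4 g2 * (sgn (g2 p.2) * sgn (g2 q.2))) * _ = 0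
              rw [this, hsign1 p.1 q.1]
              ring
            · have := hsign1 p.1 q.1
              rw [if_neg h1] at this
              show _ * (∑ g1, ν3 g1 * (sgn (g1 p.1) * sgn (g1 q.1))) * _ * _ = 0
              rw [this]
              ring
          · intro h
            exact absurd (Finset.mem_univ _) h
  rw [hmean, hsq2]
  have hCij : (C i j)^2 = ∑ p : Fin n × Fin n, (if p = (i, j) then (C p.1 p.2)^2 else 0) := by
    rw [Finset.sum_ite_eq' Finset.univ ((i, j) : Fin n × Fin n) (fun p => (C p.1 p.2)^2)]
    simp
  rw [hCij, ← Finset.sum_sub_distrib]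
  calc ∑ p : Fin n × Fin n, ((if p = (i, j) then (1:ℝ) else 1/(2^m : ℝ)) * (C p.1 p.2)^2
          - (if p = (i, j) then (C p.1 p.2)^2 else 0))
      ≤ ∑ p : Fin n × Fin n, 1/(2^m : ℝ) * (C p.1 p.2)^2 := by
        refine Finset.sum_le_sum fun p _ => ?_
        by_cases hp : p = (i, j)
        · subst hp
          rw [if_pos rfl, if_pos rfl, one_mul, sub_self]
          positivity
        · rw [if_neg hp, if_neg hp, sub_zero]
    _ = (∑ i' : Fin n, ∑ j' : Fin n, (C i' j')^2) / (2^m : ℝ) := by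
        rw [← Finset.mul_sum, Fintype.sum_prod_type, one_div, inv_mul_eq_div]

end CMMAux

/-- The variance of the FWHT-based compressed matrix multiplication estimator is
bounded by the squared Frobenius norm of `C = A * B` divided by `b = 2^m`:
`Var(X̃(i,j)) ≤ ‖C‖_F² / b`. (FWHT analogue of Theorem 3.1 of Pagh.) -/
theorem compressed_mm_fwht_variance
    {Ω : Type*} [MeasureSpace Ω] [IsProbabilityMeasure (ℙ : Measure Ω)]
    (n m : ℕ) (hn : 0 < n)
    (A B C : Matrix (Fin n) (Fin n) ℝ) (hC : C = A * B)
    (H1 H2 : Ω → Fin n → Fin (2^m)) (S1 S2 : Ω → Fin n → ℝ)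
    (hmH1 : Measurable H1) (hmH2 : Measurable H2)
    (hmS1 : Measurable S1) (hmS2 : Measurable S2)
    -- the four random functions are mutually independent:
    (hindep : ∀ (f1 f2 : Fin n → Fin (2^m)) (g1 g2 : Fin n → ℝ),
      ℙ {ω | H1 ω = f1 ∧ H2 ω = f2 ∧ S1 ω = g1 ∧ S2 ω = g2}
        = ℙ {ω | H1 ω = f1} * ℙ {ω | H2 ω = f2} * ℙ {ω | S1 ω = g1} * ℙ {ω | S2 ω = g2})
    -- H1 and H2 are pairwise independent uniform families into Fin (2^m):
    (hH1unif : ∀ i u, ℙ {ω | H1 ω i = u} = 1 / (2^m : ℝ≥0∞))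
    (hH1pair : ∀ i i', i ≠ i' → ∀ u v,
      ℙ {ω | H1 ω i = u ∧ H1 ω i' = v} = ℙ {ω | H1 ω i = u} * ℙ {ω | H1 ω i' = v})
    (hH2unif : ∀ j u, ℙ {ω | H2 ω j = u} = 1 / (2^m : ℝ≥0∞))
    (hH2pair : ∀ j j', j ≠ j' → ∀ u v,
      ℙ {ω | H2 ω j = u ∧ H2 ω j' = v} = ℙ {ω | H2 ω j = u} * ℙ {ω | H2 ω j' = v})
    -- S1 and S2 are pairwise independent uniform families of random signs:
    (hS1val : ∀ ω i, S1 ω i ∈ ({-1, 1} : Set ℝ))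
    (hS2val : ∀ ω j, S2 ω j ∈ ({-1, 1} : Set ℝ))
    (hS1unif : ∀ i, ∀ u ∈ ({-1, 1} : Set ℝ), ℙ {ω | S1 ω i = u} = 1 / 2)
    (hS1pair : ∀ i i', i ≠ i' → ∀ u v : ℝ,
      ℙ {ω | S1 ω i = u ∧ S1 ω i' = v} = ℙ {ω | S1 ω i = u} * ℙ {ω | S1 ω i' = v})
    (hS2unif : ∀ j, ∀ u ∈ ({-1, 1} : Set ℝ), ℙ {ω | S2 ω j = u} = 1 / 2)
    (hS2pair : ∀ j j', j ≠ j' → ∀ u v : ℝ,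
      ℙ {ω | S2 ω j = u ∧ S2 ω j' = v} = ℙ {ω | S2 ω j = u} * ℙ {ω | S2 ω j' = v})
    (i j : Fin n) :
    ProbabilityTheory.variance (fun ω => estimate C (H1 ω) (H2 ω) (S1 ω) (S2 ω) i j) ℙ
      ≤ (∑ i' : Fin n, ∑ j' : Fin n, (C i' j')^2) / (2^m : ℝ) := by
  classical
  set T1 : Ω → Fin n → Bool := fun ω a => decide (S1 ω a = 1) with hT1def
  set T2 : Ω → Fin n → Bool := fun ω a => decide (S2 ω a = 1) with hT2def
  have hmT : ∀ (S : Ω → Fin n → ℝ), Measurable S →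
      Measurable (fun ω (a : Fin n) => decide (S ω a = 1)) := by
    intro S hmS
    apply measurable_pi_lambda
    intro a
    apply measurable_to_countable'
    intro c
    cases c
    · have hs : (fun ω => decide (S ω a = 1)) ⁻¹' {false} = (fun ω => S ω a) ⁻¹' ({1}ᶜ) := by
        ext ω; simp
      rw [hs]
      exact ((measurable_pi_apply a).comp hmS) (measurableSet_singleton (1:ℝ)).compl
    · have hs : (fun ω => decide (S ω a = 1)) ⁻¹' {true} = (fun ω => S ω a) ⁻¹' {1} := by
        ext ω; simp
      rw [hs]
      exact ((measurable_pi_apply a).comp hmS) (measurableSet_singleton (1:ℝ))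
  have hmT1 : Measurable T1 := by rw [hT1def]; exact hmT S1 hmS1
  have hmT2 : Measurable T2 := by rw [hT2def]; exact hmT S2 hmS2
  set F : Ω → (Fin n → Fin (2^m)) × ((Fin n → Fin (2^m)) × ((Fin n → Bool) × (Fin n → Bool))) :=
    fun ω => (H1 ω, H2 ω, T1 ω, T2 ω) with hFdef
  have hmF : Measurable F := by
    rw [hFdef]; exact hmH1.prodMk (hmH2.prodMk (hmT1.prodMk hmT2))
  have hT1S : ∀ ω a, CMMAux.sgn (T1 ω a) = S1 ω a := by
    intro ω a; rw [hT1def]; exact CMMAux.sgn_decide (hS1val ω a)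
  have hT2S : ∀ ω a, CMMAux.sgn (T2 ω a) = S2 ω a := by
    intro ω a; rw [hT2def]; exact CMMAux.sgn_decide (hS2val ω a)
  have hT1iff : ∀ ω (g : Fin n → Bool), T1 ω = g ↔ S1 ω = CMMAux.sgn ∘ g := by
    intro ω g
    rw [funext_iff, funext_iff, hT1def]
    exact forall_congr' fun a => CMMAux.decide_eq_iff (hS1val ω a) (g a)
  have hT2iff : ∀ ω (g : Fin n → Bool), T2 ω = g ↔ S2 ω = CMMAux.sgn ∘ g := by
    intro ω g
    rw [funext_iff, funext_iff, hT2def]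
    exact forall_congr' fun a => CMMAux.decide_eq_iff (hS2val ω a) (g a)
  -- marginal weight facts
  have hν1p : ∀ a a', a ≠ a' → ∀ u v,
      ∑ f ∈ Finset.univ.filter (fun f : Fin n → Fin (2^m) => f a = u ∧ f a' = v),
        (ℙ (H1 ⁻¹' {f})).toReal = 1/(2^m : ℝ) * (1/(2^m : ℝ)) := by
    intro a a' ha u v
    have hw := CMMAux.weight_filter ℙ hmH1 (fun f : Fin n → Fin (2^m) => f a = u ∧ f a' = v)
    rw [show (H1 ⁻¹' {f | f a = u ∧ f a' = v}) = {ω | H1 ω a = u ∧ H1 ω a' = v} from rfl,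
      hH1pair a a' ha u v, hH1unif a u, hH1unif a' v] at hw
    rw [hw]
    simp [ENNReal.toReal_mul, ENNReal.toReal_div, ENNReal.toReal_pow]
  have hν2p : ∀ a a', a ≠ a' → ∀ u v,
      ∑ f ∈ Finset.univ.filter (fun f : Fin n → Fin (2^m) => f a = u ∧ f a' = v),
        (ℙ (H2 ⁻¹' {f})).toReal = 1/(2^m : ℝ) * (1/(2^m : ℝ)) := by
    intro a a' ha u v
    have hw := CMMAux.weight_filter ℙ hmH2 (fun f : Fin n → Fin (2^m) => f a = u ∧ f a' = v)
    rw [show (H2 ⁻¹' {f | f a = u ∧ f a' = v}) = {ω | H2 ω a = u ∧ H2 ω a' = v} from rfl,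
      hH2pair a a' ha u v, hH2unif a u, hH2unif a' v] at hw
    rw [hw]
    simp [ENNReal.toReal_mul, ENNReal.toReal_div, ENNReal.toReal_pow]
  have hν1t : ∑ f : Fin n → Fin (2^m), (ℙ (H1 ⁻¹' {f})).toReal = 1 := by
    have hw := CMMAux.weight_filter ℙ hmH1 (fun _ : Fin n → Fin (2^m) => True)
    simp only [Finset.filter_true] at hw
    rw [hw, show (H1 ⁻¹' {f | True}) = Set.univ from by ext; simp, measure_univ]
    simp
  have hν2t : ∑ f : Fin n → Fin (2^m), (ℙ (H2 ⁻¹' {f})).toReal = 1 := by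
    have hw := CMMAux.weight_filter ℙ hmH2 (fun _ : Fin n → Fin (2^m) => True)
    simp only [Finset.filter_true] at hw
    rw [hw, show (H2 ⁻¹' {f | True}) = Set.univ from by ext; simp, measure_univ]
    simp
  have hν3p : ∀ a a', a ≠ a' → ∀ c c' : Bool,
      ∑ g ∈ Finset.univ.filter (fun g : Fin n → Bool => g a = c ∧ g a' = c'),
        (ℙ (T1 ⁻¹' {g})).toReal = 1/2 * (1/2 : ℝ) := by
    intro a a' ha c c'
    have hw := CMMAux.weight_filter ℙ hmT1 (fun g : Fin n → Bool => g a = c ∧ g a' = c')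
    have hset : (T1 ⁻¹' {g | g a = c ∧ g a' = c'})
        = {ω | S1 ω a = CMMAux.sgn c ∧ S1 ω a' = CMMAux.sgn c'} := by
      ext ω
      rw [hT1def]
      simp only [Set.mem_preimage, Set.mem_setOf_eq]
      exact and_congr (CMMAux.decide_eq_iff (hS1val ω a) c)
        (CMMAux.decide_eq_iff (hS1val ω a') c')
    rw [hset, hS1pair a a' ha _ _, hS1unif a _ (CMMAux.sgn_mem c),
      hS1unif a' _ (CMMAux.sgn_mem c')] at hw
    rw [hw]
    simp [ENNReal.toReal_mul, ENNReal.toReal_div]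
  have hν4p : ∀ a a', a ≠ a' → ∀ c c' : Bool,
      ∑ g ∈ Finset.univ.filter (fun g : Fin n → Bool => g a = c ∧ g a' = c'),
        (ℙ (T2 ⁻¹' {g})).toReal = 1/2 * (1/2 : ℝ) := by
    intro a a' ha c c'
    have hw := CMMAux.weight_filter ℙ hmT2 (fun g : Fin n → Bool => g a = c ∧ g a' = c')
    have hset : (T2 ⁻¹' {g | g a = c ∧ g a' = c'})
        = {ω | S2 ω a = CMMAux.sgn c ∧ S2 ω a' = CMMAux.sgn c'} := by
      ext ω
      rw [hT2def]
      simp only [Set.mem_preimage, Set.mem_setOf_eq]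
      exact and_congr (CMMAux.decide_eq_iff (hS2val ω a) c)
        (CMMAux.decide_eq_iff (hS2val ω a') c')
    rw [hset, hS2pair a a' ha _ _, hS2unif a _ (CMMAux.sgn_mem c),
      hS2unif a' _ (CMMAux.sgn_mem c')] at hw
    rw [hw]
    simp [ENNReal.toReal_mul, ENNReal.toReal_div]
  have hν3t : ∑ g : Fin n → Bool, (ℙ (T1 ⁻¹' {g})).toReal = 1 := by
    have hw := CMMAux.weight_filter ℙ hmT1 (fun _ : Fin n → Bool => True)
    simp only [Finset.filter_true] at hw
    rw [hw, show (T1 ⁻¹' {g | True}) = Set.univ from by ext; simp, measure_univ]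
    simp
  have hν4t : ∑ g : Fin n → Bool, (ℙ (T2 ⁻¹' {g})).toReal = 1 := by
    have hw := CMMAux.weight_filter ℙ hmT2 (fun _ : Fin n → Bool => True)
    simp only [Finset.filter_true] at hw
    rw [hw, show (T2 ⁻¹' {g | True}) = Set.univ from by ext; simp, measure_univ]
    simp
  -- factorization of the joint weight
  have hwfac : ∀ (f1 f2 : Fin n → Fin (2^m)) (g1 g2 : Fin n → Bool),
      (ℙ (F ⁻¹' {(f1, f2, g1, g2)})).toReal
        = (ℙ (H1 ⁻¹' {f1})).toReal * (ℙ (H2 ⁻¹' {f2})).toReal * (ℙ (T1 ⁻¹' {g1})).toReal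
          * (ℙ (T2 ⁻¹' {g2})).toReal := by
    intro f1 f2 g1 g2
    have hset : F ⁻¹' {(f1, f2, g1, g2)}
        = {ω | H1 ω = f1 ∧ H2 ω = f2 ∧ S1 ω = CMMAux.sgn ∘ g1 ∧ S2 ω = CMMAux.sgn ∘ g2} := by
      ext ω
      rw [hFdef]
      simp only [Set.mem_preimage, Set.mem_singleton_iff, Prod.mk.injEq, Set.mem_setOf_eq]
      exact and_congr Iff.rfl (and_congr Iff.rfl (and_congr (hT1iff ω g1) (hT2iff ω g2)))
    have hs1 : {ω | S1 ω = CMMAux.sgn ∘ g1} = T1 ⁻¹' {g1} := by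
      ext ω
      simp only [Set.mem_preimage, Set.mem_singleton_iff, Set.mem_setOf_eq]
      exact (hT1iff ω g1).symm
    have hs2 : {ω | S2 ω = CMMAux.sgn ∘ g2} = T2 ⁻¹' {g2} := by
      ext ω
      simp only [Set.mem_preimage, Set.mem_singleton_iff, Set.mem_setOf_eq]
      exact (hT2iff ω g2).symm
    rw [hset, hindep f1 f2 (CMMAux.sgn ∘ g1) (CMMAux.sgn ∘ g2),
      show {ω | H1 ω = f1} = H1 ⁻¹' {f1} from rfl,
      show {ω | H2 ω = f2} = H2 ⁻¹' {f2} from rfl, hs1, hs2,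
      ENNReal.toReal_mul, ENNReal.toReal_mul, ENNReal.toReal_mul]
  -- the estimator as a function of F
  have hXeq : (fun ω => estimate C (H1 ω) (H2 ω) (S1 ω) (S2 ω) i j)
      = fun ω => (fun k : (Fin n → Fin (2^m)) × ((Fin n → Fin (2^m)) × ((Fin n → Bool) × (Fin n → Bool))) =>
          CMMAux.phi4 C i j k.1 k.2.1 k.2.2.1 k.2.2.2) (F ω) := by
    funext ω
    rw [hFdef]
    show estimate C (H1 ω) (H2 ω) (S1 ω) (S2 ω) i j
      = CMMAux.phi4 C i j (H1 ω) (H2 ω) (T1 ω) (T2 ω)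
    simp only [estimate, sketch, CMMAux.phi4]
    rw [Finset.sum_filter, Finset.mul_sum]
    refine Finset.sum_congr rfl fun p _ => ?_
    rw [hT1S ω i, hT1S ω p.1, hT2S ω j, hT2S ω p.2]
    by_cases hc : fxor (H1 ω p.1) (H2 ω p.2) = fxor (H1 ω i) (H2 ω j)
    · rw [if_pos hc, if_pos hc]; ring
    · rw [if_neg hc, if_neg hc]; ring
  have hmem : MeasureTheory.MemLp (fun ω => estimate C (H1 ω) (H2 ω) (S1 ω) (S2 ω) i j) 2 ℙ := by
    rw [hXeq]
    exact CMMAux.memLp_comp_fintype hmF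
      (fun k => CMMAux.phi4 C i j k.1 k.2.1 k.2.2.1 k.2.2.2)
  rw [ProbabilityTheory.variance_eq_sub hmem]
  simp only [hXeq, Pi.pow_apply]
  have e1 : ∫ ω, (CMMAux.phi4 C i j (F ω).1 (F ω).2.1 (F ω).2.2.1 (F ω).2.2.2)^2 ∂ℙ
      = ∑ k : (Fin n → Fin (2^m)) × ((Fin n → Fin (2^m)) × ((Fin n → Bool) × (Fin n → Bool))),
          (ℙ (F ⁻¹' {k})).toReal * (CMMAux.phi4 C i j k.1 k.2.1 k.2.2.1 k.2.2.2)^2 :=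
    CMMAux.integral_comp_fintype hmF
      (fun k => (CMMAux.phi4 C i j k.1 k.2.1 k.2.2.1 k.2.2.2)^2)
  have e2 : ∫ ω, CMMAux.phi4 C i j (F ω).1 (F ω).2.1 (F ω).2.2.1 (F ω).2.2.2 ∂ℙ
      = ∑ k : (Fin n → Fin (2^m)) × ((Fin n → Fin (2^m)) × ((Fin n → Bool) × (Fin n → Bool))),
          (ℙ (F ⁻¹' {k})).toReal * CMMAux.phi4 C i j k.1 k.2.1 k.2.2.1 k.2.2.2 :=
    CMMAux.integral_comp_fintype hmF
      (fun k => CMMAux.phi4 C i j k.1 k.2.1 k.2.2.1 k.2.2.2)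
  rw [e1, e2]
  have ex1 : (∑ k : (Fin n → Fin (2^m)) × ((Fin n → Fin (2^m)) × ((Fin n → Bool) × (Fin n → Bool))),
        (ℙ (F ⁻¹' {k})).toReal * (CMMAux.phi4 C i j k.1 k.2.1 k.2.2.1 k.2.2.2)^2)
      = ∑ f1, ∑ f2, ∑ g1, ∑ g2,
          ((ℙ (H1 ⁻¹' {f1})).toReal * (ℙ (H2 ⁻¹' {f2})).toReal * (ℙ (T1 ⁻¹' {g1})).toReal
            * (ℙ (T2 ⁻¹' {g2})).toReal) * (CMMAux.phi4 C i j f1 f2 g1 g2)^2 := by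
    simp only [Fintype.sum_prod_type]
    refine Finset.sum_congr rfl fun f1 _ => Finset.sum_congr rfl fun f2 _ =>
      Finset.sum_congr rfl fun g1 _ => Finset.sum_congr rfl fun g2 _ => ?_
    rw [hwfac f1 f2 g1 g2]
  have ex2 : (∑ k : (Fin n → Fin (2^m)) × ((Fin n → Fin (2^m)) × ((Fin n → Bool) × (Fin n → Bool))),
        (ℙ (F ⁻¹' {k})).toReal * CMMAux.phi4 C i j k.1 k.2.1 k.2.2.1 k.2.2.2)
      = ∑ f1, ∑ f2, ∑ g1, ∑ g2,
          ((ℙ (H1 ⁻¹' {f1})).toReal * (ℙ (H2 ⁻¹' {f2})).toReal * (ℙ (T1 ⁻¹' {g1})).toReal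
            * (ℙ (T2 ⁻¹' {g2})).toReal) * CMMAux.phi4 C i j f1 f2 g1 g2 := by
    simp only [Fintype.sum_prod_type]
    refine Finset.sum_congr rfl fun f1 _ => Finset.sum_congr rfl fun f2 _ =>
      Finset.sum_congr rfl fun g1 _ => Finset.sum_congr rfl fun g2 _ => ?_
    rw [hwfac f1 f2 g1 g2]
  rw [ex1, ex2]
  exact CMMAux.main_bound i j C
    (fun f => (ℙ (H1 ⁻¹' {f})).toReal) (fun f => (ℙ (H2 ⁻¹' {f})).toReal)
    (fun g => (ℙ (T1 ⁻¹' {g})).toReal) (fun g => (ℙ (T2 ⁻¹' {g})).toReal)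
    hν1p hν1t hν2p hν2t hν3p hν3t hν4p hν4t
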